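/- arXiv:math/0111302 — 2 statements merged into one kernel-verified Lean document; each statement's English description precedes it below -/
import Mathlib

section
/- For a pure (d-1)-dimensional simplicial complex Δ, the f-numbers are recovered from the short simplicial h-vector by f_j(Δ) = (j+1)^{-1} ∑_{i=0}^{j} C(d-1-i, d-1-j) h̃_i(Δ) for 0 ≤ j ≤ d-1. In particular, each f_j is a non-negative rational linear combination of h̃_0, ..., h̃_j. -/
open Finset

/-- An abstract simplicial complex on vertex set `V`, given by its finite set of faces. -/
structure SC (V : Type*) [DecidableEq V] where
  faces : Finset (Finset V)
  empty_mem : ∅ ∈ faces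
  down_closed : ∀ F ∈ faces, ∀ G ⊆ F, G ∈ faces

variable {V : Type*} [DecidableEq V] [Fintype V]

/-- The link of a vertex `v`. -/
def link (S : Finset (Finset V)) (v : V) : Finset (Finset V) :=
  S.filter fun F => v ∉ F ∧ insert v F ∈ S

/-- `fnum S m` is the number of faces of cardinality `m`, i.e. `f_{m-1}`. -/
def fnum (S : Finset (Finset V)) (m : ℕ) : ℕ := (S.filter fun F => F.card = m).card

/-- A complex is pure of dimension `d-1` if every face is contained in a face with `d` vertices. -/
def IsPure (S : Finset (Finset V)) (d : ℕ) : Prop :=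
  ∀ F ∈ S, ∃ G ∈ S, F ⊆ G ∧ G.card = d

/-- The `h`-numbers of a complex `S` of dimension `D - 1`:
`h_i = ∑_{j=0}^i (-1)^{i-j} C(D-j, D-i) f_{j-1}`. -/
def hnum (D : ℕ) (S : Finset (Finset V)) (i : ℕ) : ℚ :=
  ∑ j ∈ Finset.range (i + 1),
    (-1 : ℚ) ^ (i - j) * ((D - j).choose (D - i) : ℚ) * (fnum S j : ℚ)

/-- Alternating sum of binomial coefficients, over `ℚ`. -/
lemma alt_sum_choose (n : ℕ) :
    ∑ t ∈ Finset.range (n + 1), (-1 : ℚ) ^ t * (n.choose t : ℚ)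
      = if n = 0 then 1 else 0 := by
  have h := Int.alternating_sum_range_choose (n := n)
  have : ((∑ i ∈ Finset.range (n + 1), (-1 : ℤ) ^ i * n.choose i : ℤ) : ℚ)
      = ∑ t ∈ Finset.range (n + 1), (-1 : ℚ) ^ t * (n.choose t : ℚ) := by
    push_cast
    rfl
  rw [← this, h]
  split_ifs <;> norm_num

/-- The key orthogonality sum. -/
lemma key_sum (D j k : ℕ) (hk : k ≤ j) (hj : j ≤ D) :
    ∑ i ∈ Finset.Ico k (j + 1),
      (-1 : ℚ) ^ (i - k) * ((D - i).choose (D - j) : ℚ) * ((D - k).choose (D - i) : ℚ)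
      = if k = j then 1 else 0 := by
  rw [Finset.sum_Ico_eq_sum_range]
  have hjk : j + 1 - k = (j - k) + 1 := by omega
  rw [hjk]
  have hterm : ∀ t ∈ Finset.range ((j - k) + 1),
      (-1 : ℚ) ^ (k + t - k) * ((D - (k + t)).choose (D - j) : ℚ)
          * ((D - k).choose (D - (k + t)) : ℚ)
      = ((D - k).choose (D - j) : ℚ) * ((-1 : ℚ) ^ t * ((j - k).choose t : ℚ)) := by
    intro t ht
    rw [Finset.mem_range] at ht
    have hktj : k + t ≤ j := by omega
    have h1 : D - (k + t) ≤ D - k := by omega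
    have h2 : D - j ≤ D - (k + t) := by omega
    have hmul := Nat.choose_mul (n := D - k) (k := D - (k + t)) (s := D - j) h2
    have e1 : D - k - (D - j) = j - k := by omega
    have e2 : D - (k + t) - (D - j) = j - k - t := by omega
    rw [e1, e2] at hmul
    have e3 : (j - k).choose (j - k - t) = (j - k).choose t := by
      apply Nat.choose_symm
      omega
    rw [e3] at hmul
    have e4 : k + t - k = t := by omega
    rw [e4]
    have : ((D - (k + t)).choose (D - j) : ℚ) * ((D - k).choose (D - (k + t)) : ℚ)
        = ((D - k).choose (D - j) : ℚ) * ((j - k).choose t : ℚ) := by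
      rw [mul_comm]
      exact_mod_cast congrArg (Nat.cast (R := ℚ)) hmul
    linear_combination ((-1 : ℚ)) ^ t * this
  rw [Finset.sum_congr rfl hterm, ← Finset.mul_sum, alt_sum_choose]
  by_cases hkj : k = j
  · subst hkj
    simp
  · have : j - k ≠ 0 := by omega
    simp [this, hkj]

/-- Binomial inversion: the f-numbers are recovered from the h-numbers. -/
lemma inv_lemma (D : ℕ) (S : Finset (Finset V)) (j : ℕ) (hj : j ≤ D) :
    ∑ i ∈ Finset.range (j + 1), ((D - i).choose (D - j) : ℚ) * hnum D S i
      = (fnum S j : ℚ) := by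
  unfold hnum
  have step1 : ∀ i ∈ Finset.range (j + 1),
      ((D - i).choose (D - j) : ℚ) *
        ∑ k ∈ Finset.range (i + 1),
          (-1 : ℚ) ^ (i - k) * ((D - k).choose (D - i) : ℚ) * (fnum S k : ℚ)
      = ∑ k ∈ Finset.range (j + 1),
          if k ≤ i then
            (-1 : ℚ) ^ (i - k) * ((D - i).choose (D - j) : ℚ)
              * ((D - k).choose (D - i) : ℚ) * (fnum S k : ℚ)
          else 0 := by
    intro i hi
    rw [Finset.mem_range] at hi
    rw [Finset.mul_sum, Finset.sum_ite, Finset.sum_const_zero, add_zero]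
    have : Finset.filter (fun k => k ≤ i) (Finset.range (j + 1)) = Finset.range (i + 1) := by
      ext k
      simp only [Finset.mem_filter, Finset.mem_range]
      omega
    rw [this]
    exact Finset.sum_congr rfl fun k _ => by ring
  rw [Finset.sum_congr rfl step1, Finset.sum_comm]
  have step2 : ∀ k ∈ Finset.range (j + 1),
      (∑ i ∈ Finset.range (j + 1),
        if k ≤ i then
          (-1 : ℚ) ^ (i - k) * ((D - i).choose (D - j) : ℚ)
            * ((D - k).choose (D - i) : ℚ) * (fnum S k : ℚ)
        else 0)
      = (if k = j then 1 else 0) * (fnum S k : ℚ) := by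
    intro k hk
    rw [Finset.mem_range] at hk
    rw [Finset.sum_ite, Finset.sum_const_zero, add_zero]
    have hfilt : Finset.filter (fun i => k ≤ i) (Finset.range (j + 1)) = Finset.Ico k (j + 1) := by
      ext i
      simp only [Finset.mem_filter, Finset.mem_range, Finset.mem_Ico]
      omega
    rw [hfilt, show (∑ i ∈ Finset.Ico k (j + 1),
        (-1 : ℚ) ^ (i - k) * ((D - i).choose (D - j) : ℚ)
          * ((D - k).choose (D - i) : ℚ) * (fnum S k : ℚ))
      = (∑ i ∈ Finset.Ico k (j + 1),
        (-1 : ℚ) ^ (i - k) * ((D - i).choose (D - j) : ℚ)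
          * ((D - k).choose (D - i) : ℚ)) * (fnum S k : ℚ) from
      (Finset.sum_mul _ _ _).symm]
    rw [key_sum D j k (by omega) hj]
  rw [Finset.sum_congr rfl step2]
  simp

/-- Double counting: summing `fnum` of links counts faces of cardinality `j+1` with multiplicity. -/
lemma double_count (S : Finset (Finset V))
    (hdc : ∀ F ∈ S, ∀ G ⊆ F, G ∈ S) (j : ℕ) :
    ∑ v : V, fnum (link S v) j = (j + 1) * fnum S (j + 1) := by
  classical
  have lhs_eq : ∑ v : V, fnum (link S v) j
      = ((Finset.univ : Finset V).sigma fun v =>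
          (link S v).filter fun F => F.card = j).card := by
    rw [Finset.card_sigma]
    rfl
  have rhs_eq : (j + 1) * fnum S (j + 1)
      = ((S.filter fun F => F.card = j + 1).sigma fun G => G).card := by
    rw [Finset.card_sigma]
    unfold fnum
    rw [Finset.card_eq_sum_ones (S.filter fun F => F.card = j + 1), Finset.mul_sum]
    apply Finset.sum_congr rfl
    intro G hG
    rw [Finset.mem_filter] at hG
    simp [hG.2]
  rw [lhs_eq, rhs_eq]
  refine Finset.card_bij' (fun p _ => ⟨insert p.1 p.2, p.1⟩)
    (fun q _ => ⟨q.2, q.1.erase q.2⟩) ?hi ?hj ?li ?ri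
  case hi =>
    rintro ⟨v, F⟩ hp
    simp only [Finset.mem_sigma, Finset.mem_univ, Finset.mem_filter, true_and, link] at hp
    obtain ⟨⟨hFS, hvF, hins⟩, hcard⟩ := hp
    rw [Finset.mem_sigma, Finset.mem_filter]
    exact ⟨⟨hins, by rw [Finset.card_insert_of_notMem hvF, hcard]⟩,
      Finset.mem_insert_self _ _⟩
  case hj =>
    rintro ⟨G, v⟩ hq
    rw [Finset.mem_sigma, Finset.mem_filter] at hq
    obtain ⟨⟨hGS, hcard⟩, hvG⟩ := hq
    have herase : G.erase v ∈ S := hdc G hGS _ (Finset.erase_subset _ _)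
    have hins : insert v (G.erase v) = G := Finset.insert_erase hvG
    rw [Finset.mem_sigma, Finset.mem_filter, link, Finset.mem_filter]
    exact ⟨Finset.mem_univ _, ⟨herase, Finset.notMem_erase _ _, by rw [hins]; exact hGS⟩,
      by rw [Finset.card_erase_of_mem hvG, hcard]; omega⟩
  case li =>
    rintro ⟨v, F⟩ hp
    simp only [Finset.mem_sigma, Finset.mem_univ, Finset.mem_filter, true_and, link] at hp
    obtain ⟨⟨hFS, hvF, hins⟩, hcard⟩ := hp
    simp [Finset.erase_insert hvF]
  case ri =>
    rintro ⟨G, v⟩ hq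
    simp only [Finset.mem_sigma, Finset.mem_filter] at hq
    obtain ⟨⟨hGS, hcard⟩, hvG⟩ := hq
    simp [Finset.insert_erase hvG]

/-- f_j(Δ) = (j+1)⁻¹ ∑_{i=0}^{j} C(d-1-i, d-1-j) h̃_i(Δ) for 0 ≤ j ≤ d-1. -/
theorem statement3 (d : ℕ) (Δ : SC V) (hpure : IsPure Δ.faces d)
    (j : ℕ) (hj : j ≤ d - 1) :
    (fnum Δ.faces (j + 1) : ℚ)
      = ((j : ℚ) + 1)⁻¹ *
          ∑ i ∈ Finset.range (j + 1),
            ((d - 1 - i).choose (d - 1 - j) : ℚ) *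
              (∑ v : V, hnum (d - 1) (link Δ.faces v) i) := by
  have hswap : ∑ i ∈ Finset.range (j + 1),
      ((d - 1 - i).choose (d - 1 - j) : ℚ) *
        (∑ v : V, hnum (d - 1) (link Δ.faces v) i)
      = ∑ v : V, ∑ i ∈ Finset.range (j + 1),
          ((d - 1 - i).choose (d - 1 - j) : ℚ) * hnum (d - 1) (link Δ.faces v) i := by
    rw [Finset.sum_comm]
    exact Finset.sum_congr rfl fun i _ => Finset.mul_sum _ _ _
  rw [hswap]
  have hinv : ∀ v : V, ∑ i ∈ Finset.range (j + 1),
      ((d - 1 - i).choose (d - 1 - j) : ℚ) * hnum (d - 1) (link Δ.faces v) i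
      = (fnum (link Δ.faces v) j : ℚ) :=
    fun v => inv_lemma (d - 1) (link Δ.faces v) j hj
  rw [Finset.sum_congr rfl fun v _ => hinv v]
  have hdc := double_count Δ.faces Δ.down_closed j
  have : (∑ v : V, (fnum (link Δ.faces v) j : ℚ))
      = ((j : ℚ) + 1) * (fnum Δ.faces (j + 1) : ℚ) := by
    rw [← Nat.cast_sum]
    rw [hdc]
    push_cast
    ring
  rw [this]
  have hne : ((j : ℚ) + 1) ≠ 0 := by positivity
  field_simp
end

section
/- For integers d, i, l with 0 ≤ l ≤ i ≤ ⌊(d-1)/2⌋, the sequence a_j := (1/(j+1)) C(d-1-l, d-1-j) for l ≤ j ≤ i is non-decreasing in j; equivalently, (1/(j+1)) C(d-1-l, d-1-j) ≥ (1/j) C(d-1-l, d-j) for all l+1 ≤ j ≤ i. Consequently, the alternating sum ∑_{j=l}^{i} (-1)^{i-j} (1/(j+1)) C(d-1-l, d-1-j) is non-negative. -/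
/-- Alternating sum of a nondecreasing nonnegative sequence, ending with positive sign,
is nonnegative. -/
lemma alt_sum_nonneg (a : ℕ → ℚ) (l : ℕ) (h0 : ∀ j, 0 ≤ a j) :
    ∀ n, (∀ j, l ≤ j → j < l + n → a j ≤ a (j + 1)) →
      0 ≤ ∑ j ∈ Finset.Icc l (l + n), (-1 : ℚ) ^ (l + n - j) * a j := by
  intro n
  induction n using Nat.strong_induction_on with
  | _ n ih =>
    match n with
    | 0 =>
      intro _
      simpa using h0 l
    | 1 =>
      intro hmono
      rw [Finset.sum_Icc_succ_top (by omega : l ≤ l + 1)]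
      have h1 := hmono l le_rfl (by omega)
      have : ∑ j ∈ Finset.Icc l l, (-1 : ℚ) ^ (l + 1 - j) * a j = -(a l) := by
        rw [Finset.Icc_self, Finset.sum_singleton, show l + 1 - l = 1 by omega]
        ring
      rw [this, show l + 1 - (l + 1) = 0 by omega, pow_zero, one_mul]
      linarith
    | (m + 2) =>
      intro hmono
      have h1 := ih m (by omega) (fun j hj hj' => hmono j hj (by omega))
      have hrw : ∑ j ∈ Finset.Icc l (l + m), (-1 : ℚ) ^ (l + (m + 2) - j) * a j
          = ∑ j ∈ Finset.Icc l (l + m), (-1 : ℚ) ^ (l + m - j) * a j := by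
        apply Finset.sum_congr rfl
        intro j hj
        rw [Finset.mem_Icc] at hj
        rw [show l + (m + 2) - j = (l + m - j) + 2 by omega, pow_add]
        norm_num
      have key : ∑ j ∈ Finset.Icc l (l + (m + 2)), (-1 : ℚ) ^ (l + (m + 2) - j) * a j
          = (∑ j ∈ Finset.Icc l (l + m), (-1 : ℚ) ^ (l + m - j) * a j)
            + (a (l + m + 2) - a (l + m + 1)) := by
        rw [show l + (m + 2) = (l + m + 1) + 1 by omega]
        rw [Finset.sum_Icc_succ_top (by omega)]
        rw [show l + m + 1 = (l + m) + 1 by omega]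
        rw [Finset.sum_Icc_succ_top (by omega)]
        rw [show (l + m + 1) + 1 - ((l + m) + 1) = 1 by omega]
        rw [show (l + m + 1) + 1 - ((l + m + 1) + 1) = 0 by omega]
        have : ∑ j ∈ Finset.Icc l (l + m), (-1 : ℚ) ^ ((l + m + 1) + 1 - j) * a j
            = ∑ j ∈ Finset.Icc l (l + m), (-1 : ℚ) ^ (l + m - j) * a j := by
          apply Finset.sum_congr rfl
          intro j hj
          rw [Finset.mem_Icc] at hj
          rw [show (l + m + 1) + 1 - j = (l + m - j) + 2 by omega, pow_add]
          norm_num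
        rw [this]
        ring
      rw [key]
      have h2 := hmono (l + m + 1) (by omega) (by omega)
      have : a (l + m + 1 + 1) = a (l + m + 2) := by norm_num
      linarith [this ▸ h2]

/-- for 0 ≤ l ≤ i ≤ ⌊(d-1)/2⌋, the sequence (1/(j+1)) C(d-1-l, d-1-j) is
non-decreasing in j for l ≤ j ≤ i, and consequently
∑_{j=l}^{i} (-1)^{i-j} (1/(j+1)) C(d-1-l, d-1-j) ≥ 0. -/
theorem statement5 (d i l : ℕ) (hl : l ≤ i) (hi : i ≤ (d - 1) / 2) :
    (∀ j, l + 1 ≤ j → j ≤ i →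
      (1 / (j : ℚ)) * ((d - 1 - l).choose (d - j) : ℚ)
        ≤ (1 / ((j : ℚ) + 1)) * ((d - 1 - l).choose (d - 1 - j) : ℚ)) ∧
    0 ≤ ∑ j ∈ Finset.Icc l i,
        (-1 : ℚ) ^ (i - j) * (1 / ((j : ℚ) + 1)) * ((d - 1 - l).choose (d - 1 - j) : ℚ) := by
  have part1 : ∀ j, l + 1 ≤ j → j ≤ i →
      (1 / (j : ℚ)) * ((d - 1 - l).choose (d - j) : ℚ)
        ≤ (1 / ((j : ℚ) + 1)) * ((d - 1 - l).choose (d - 1 - j) : ℚ) := by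
    intro j hj1 hj2
    set n := d - 1 - l with hn
    set k := d - 1 - j with hk
    have hj0 : 1 ≤ j := by omega
    have hd : 2 * j + 1 ≤ d := by omega
    have hdj : d - j = k + 1 := by omega
    have hnk : n - k = j - l := by omega
    -- key natural-number inequality
    have h1 : (j + 1) * (j - l) ≤ j * (d - j) := by
      calc (j + 1) * (j - l) ≤ (d - j) * j :=
            Nat.mul_le_mul (by omega) (by omega)
        _ = j * (d - j) := by ring
    have key : (j + 1) * n.choose (k + 1) * (k + 1) ≤ j * n.choose k * (k + 1) := by
      rw [mul_assoc, Nat.choose_succ_right_eq, hnk]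
      calc (j + 1) * (n.choose k * (j - l)) = n.choose k * ((j + 1) * (j - l)) := by ring
        _ ≤ n.choose k * (j * (d - j)) := Nat.mul_le_mul_left _ h1
        _ = j * n.choose k * (k + 1) := by rw [hdj]; ring
    have key2 : (j + 1) * n.choose (k + 1) ≤ j * n.choose k :=
      Nat.le_of_mul_le_mul_right key (by omega)
    have keyQ : ((j : ℚ) + 1) * (n.choose (k + 1) : ℚ) ≤ (j : ℚ) * (n.choose k : ℚ) := by
      exact_mod_cast key2
    have hjq : (0 : ℚ) < (j : ℚ) := by exact_mod_cast hj0
    rw [hdj, div_mul_eq_mul_div, div_mul_eq_mul_div, div_le_div_iff₀ hjq (by positivity)]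
    linear_combination keyQ
  refine ⟨part1, ?_⟩
  obtain ⟨m, rfl⟩ : ∃ m, i = l + m := ⟨i - l, by omega⟩
  have := alt_sum_nonneg (fun j => 1 / ((j : ℚ) + 1) * ((d - 1 - l).choose (d - 1 - j) : ℚ))
    l (fun j => by positivity) m ?_
  · simpa [mul_assoc] using this
  · intro j hj hj'
    have h := part1 (j + 1) (by omega) (by omega)
    rw [show d - (j + 1) = d - 1 - j by omega] at h
    push_cast at h ⊢
    exact h
end
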